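/- arXiv:2205.10194 — 2 statements merged into one kernel-verified Lean document; each statement's English description precedes it below -/
import Mathlib

section
/- Let (𝒱, ℰ) be a tree-cover of a finite metric space (X,d) and let W be a minimum spanning tree of (X,d). Then for every edge (u,v) of W there exists a unique set A ∈ ℰ containing both endpoints u and v. -/
open scoped Classical

noncomputable section

namespace Skel

/-- `m`-dimensional Euclidean space. -/
abbrev Euc (m : ℕ) : Type := EuclideanSpace ℝ (Fin m)

/-- Length (Euclidean distance between the two members) of an unordered pair of points. -/
def sym2Dist {X : Type*} [PseudoMetricSpace X] : Sym2 X → ℝ :=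
  Sym2.lift ⟨fun u v => dist u v, fun u v => dist_comm u v⟩

/-- Euclidean length of an edge under a vertex placement `pos`. -/
def edgeLen {V : Type*} {m : ℕ} (pos : V → Euc m) (e : Sym2 V) : ℝ :=
  sym2Dist (e.map pos)

/-- Straight-line segment realizing an unordered pair of vertices. -/
def edgeSeg {V : Type*} {m : ℕ} (pos : V → Euc m) : Sym2 V → Set (Euc m) :=
  Sym2.lift ⟨fun u v => segment ℝ (pos u) (pos v), fun u v => segment_symm ℝ (pos u) (pos v)⟩

/-- Closed `ε`-offset of a set. -/
def offset {X : Type*} [PseudoMetricSpace X] (S : Set X) (ε : ℝ) : Set X :=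
  {x | ∃ y ∈ S, dist x y ≤ ε}

/-- Geometric realization (union of straight-line edges) of a graph. -/
def shape {V : Type*} {m : ℕ} (G : SimpleGraph V) (pos : V → Euc m) : Set (Euc m) :=
  ⋃ e ∈ G.edgeSet, edgeSeg pos e

/-- Geometric realization of the portion of a graph inside a vertex subset `S`. -/
def shapeOn {V : Type*} {m : ℕ} (G : SimpleGraph V) (pos : V → Euc m) (S : Set V) :
    Set (Euc m) :=
  (pos '' S) ∪ ⋃ e ∈ {e ∈ G.edgeSet | ∀ x ∈ e, x ∈ S}, edgeSeg pos e

/-- Total length of a walk in a geometric graph. -/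
def walkCost {X : Type*} [PseudoMetricSpace X] {G : SimpleGraph X} {u v : X}
    (p : G.Walk u v) : ℝ :=
  (p.edges.map sym2Dist).sum

/-- Shortest-path metric of a geometric graph (edges weighted by Euclidean length). -/
def pathDist {X : Type*} [PseudoMetricSpace X] (G : SimpleGraph X) (u v : X) : ℝ :=
  sInf {c | ∃ p : G.Walk u v, walkCost p = c}

/-- Maximal edge length of a geometric graph. -/
def lmax {X : Type*} [PseudoMetricSpace X] (G : SimpleGraph X) : ℝ :=
  sSup (sym2Dist '' G.edgeSet)

/-- Minimal distance between two sets. -/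
def setDist {X : Type*} [PseudoMetricSpace X] (s t : Set X) : ℝ :=
  sInf {d | ∃ x ∈ s, ∃ y ∈ t, d = dist x y}

/-- Two edges (unordered pairs) are non-adjacent: distinct and sharing no vertex. -/
def nonAdjacent {V : Type*} (e h : Sym2 V) : Prop :=
  e ≠ h ∧ ∀ x, x ∈ e → x ∉ h

/-- The set of angles between pairs of (distinct) edges adjacent at a common vertex. -/
def angleSet {V : Type*} {m : ℕ} (T : SimpleGraph V) (pos : V → Euc m) : Set ℝ :=
  {θ | ∃ v a b : V, T.Adj v a ∧ T.Adj v b ∧ a ≠ b ∧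
    θ = EuclideanGeometry.angle (pos a) (pos v) (pos b)}

/-- Total edge cost of a graph, edges weighted by `d`. -/
def graphCost {X : Type*} (d : X → X → ℝ) (W : SimpleGraph X) : ℝ :=
  (∑ᶠ u, ∑ᶠ v, if W.Adj u v then d u v else 0) / 2

/-- A minimum spanning tree on the whole vertex type, edges weighted by `d`. -/
def IsMST {X : Type*} (d : X → X → ℝ) (W : SimpleGraph X) : Prop :=
  W.IsTree ∧ ∀ W' : SimpleGraph X, W'.IsTree → graphCost d W ≤ graphCost d W'

/-- A graph on an ambient type whose edges lie in `S` and which spans `S` as a tree. -/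
def IsSpanningTreeOn {X : Type*} (S : Set X) (W : SimpleGraph X) : Prop :=
  (∀ a b, W.Adj a b → a ∈ S ∧ b ∈ S) ∧ (W.induce S).IsTree

/-- A minimum spanning tree of the metric subspace `(S, d)`, realized on the ambient type. -/
def IsMSTOn {X : Type*} (d : X → X → ℝ) (S : Set X) (W : SimpleGraph X) : Prop :=
  IsSpanningTreeOn S W ∧
    ∀ W' : SimpleGraph X, IsSpanningTreeOn S W' → graphCost d W ≤ graphCost d W'

/-- Graph-cover `(𝒱, ℰ)` of the space `X`. -/
def IsGraphCover {X : Type*} (V : Set X) (E : Set (Set X)) : Prop :=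
  V.Finite ∧ E.Finite ∧ ⋃₀ E = Set.univ ∧
    (∀ A ∈ E, ∀ B ∈ E, A ≠ B → (A ∩ B).Subsingleton ∧ A ∩ B ⊆ V) ∧
    (∀ A ∈ E, ∃ u v : X, u ≠ v ∧ V ∩ A = {u, v})

/-- Underlying simple graph of the nerve of a cover. -/
def nerve {X : Type*} (V : Set X) (E : Set (Set X)) : SimpleGraph V where
  Adj u v := u ≠ v ∧ ∃ A ∈ E, (u : X) ∈ A ∧ (v : X) ∈ A
  symm := by
    constructor
    rintro u v ⟨h, A, hA, hu, hv⟩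
    exact ⟨Ne.symm h, A, hA, hv, hu⟩
  loopless := by
    constructor
    rintro u ⟨h, -⟩
    exact h rfl

/-- The nerve, as a multigraph with one edge per cover set, is a tree:
its underlying simple graph is a tree and there are no parallel edges. -/
def NerveIsTree {X : Type*} (V : Set X) (E : Set (Set X)) : Prop :=
  (nerve V E).IsTree ∧
    ∀ A ∈ E, ∀ B ∈ E, ∀ u v : X, u ≠ v → u ∈ V → v ∈ V →
      u ∈ A → v ∈ A → u ∈ B → v ∈ B → A = B

/-- Tree-cover of a space with distance function `d`. -/
def IsTreeCover {X : Type*} (d : X → X → ℝ) (V : Set X) (E : Set (Set X)) : Prop :=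
  IsGraphCover V E ∧ NerveIsTree V E ∧
    ∀ u v : X, u ≠ v → (¬ ∃ A ∈ E, u ∈ A ∧ v ∈ A) →
      ∃ t : X, max (d u t) (d v t) < d u v

/-- Standing hypotheses: `T` is a straight-line tree realized by `pos` in `ℝ^m`,
`C` is an `ε`-sample of `T`, `G` is a connected graph with vertex set `C` which is a
`γ`-approximation of `(T, C)`, `D ⊆ C` is `δ`-sparse in the path metric of `G`,
every vertex of `T` lies within `ε` of `D`, `θT` is the minimal angle between adjacent
edges of `T`, and `δ` satisfies the key inequality. -/
structure Standing {V : Type*} {m : ℕ} (T : SimpleGraph V) (pos : V → Euc m)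
    (C D : Set (Euc m)) (G : SimpleGraph (Euc m)) (γ ε δ θT : ℝ) : Prop where
  tree : T.IsTree
  pos_inj : Function.Injective pos
  eps_pos : 0 < ε
  gamma_ge : 1 ≤ γ
  C_fin : C.Finite
  sample : ∀ p ∈ C, ∃ q ∈ shape T pos, dist p q ≤ ε
  G_support : ∀ a b, G.Adj a b → a ∈ C ∧ b ∈ C
  G_conn : ∀ a ∈ C, ∀ b ∈ C, G.Reachable a b
  approx1 : ∀ e ∈ T.edgeSet, ∀ a ∈ C, ∀ b ∈ C,
      a ∈ offset (edgeSeg pos e) ε → b ∈ offset (edgeSeg pos e) ε →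
      pathDist G a b ≤ γ * dist a b
  approx2 : ∀ e ∈ T.edgeSet, ∀ h ∈ T.edgeSet, nonAdjacent e h →
      lmax G + 2 * ε < setDist (edgeSeg pos e) (edgeSeg pos h)
  D_sub : D ⊆ C
  sparse : ∀ a ∈ D, ∀ b ∈ D, a ≠ b → δ ≤ pathDist G a b
  vert_close : ∀ v : V, ∃ p ∈ D, dist (pos v) p ≤ ε
  theta_least : IsLeast (angleSet T pos) θT
  delta_ge : 2 * γ * (ε + ε / Real.sin (θT / 2)
      + lmax G / Real.sin (min θT (Real.pi / 2))) ≤ δ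

end Skel

open Skel

section AuxMST

open SimpleGraph

private lemma walk_side {X : Type*} (W : SimpleGraph X) (u v : X) {x y : X} (p : W.Walk x y)
    (hx : (W \ fromEdgeSet {s(u,v)}).Reachable u x ∨ (W \ fromEdgeSet {s(u,v)}).Reachable v x) :
    (W \ fromEdgeSet {s(u,v)}).Reachable u y ∨ (W \ fromEdgeSet {s(u,v)}).Reachable v y := by
  revert hx
  induction p with
  | nil => exact id
  | @cons a b c h q ih =>
    intro hx
    apply ih
    by_cases he : s(a, b) = s(u, v)
    · rw [Sym2.eq_iff] at he
      rcases he with ⟨rfl, rfl⟩ | ⟨rfl, rfl⟩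
      · exact Or.inr (Reachable.refl _)
      · exact Or.inl (Reachable.refl _)
    · have hadj : (W \ fromEdgeSet {s(u,v)}).Adj a b := by
        simp only [sdiff_adj, fromEdgeSet_adj, Set.mem_singleton_iff]
        exact ⟨h, fun hc => he hc.1⟩
      rcases hx with h1 | h1
      · exact Or.inl (h1.trans hadj.reachable)
      · exact Or.inr (h1.trans hadj.reachable)

private lemma sum_pair_ite {X : Type*} [Fintype X] (u v : X) (huv : u ≠ v) (c : ℝ) :
    ∑ a : X, ∑ b : X, (if (a = u ∧ b = v) ∨ (a = v ∧ b = u) then c else 0) = 2 * c := by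
  have inner : ∀ a : X, (∑ b : X, if (a = u ∧ b = v) ∨ (a = v ∧ b = u) then c else 0)
      = (if a = u then c else 0) + (if a = v then c else 0) := by
    intro a
    by_cases hau : a = u
    · subst hau
      simp [huv, Finset.sum_ite_eq']
    · by_cases hav : a = v
      · subst hav
        simp [hau, Finset.sum_ite_eq']
      · simp [hau, hav]
  rw [Finset.sum_congr rfl fun a _ => inner a, Finset.sum_add_distrib]
  simp [Finset.sum_ite_eq', two_mul]

private lemma graphCost_eq {X : Type*} [Fintype X] (d : X → X → ℝ) (W : SimpleGraph X) :
    Skel.graphCost d W = (∑ a : X, ∑ b : X, if W.Adj a b then d a b else 0) / 2 := by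
  rw [Skel.graphCost]
  congr 1
  rw [finsum_eq_sum_of_fintype]
  exact Finset.sum_congr rfl fun a _ => finsum_eq_sum_of_fintype _

private lemma mst_swap {X : Type*} [MetricSpace X] [Finite X]
    (W : SimpleGraph X) (hW : Skel.IsMST (fun a b => dist a b) W)
    (u v t : X) (huv : W.Adj u v) (htu : t ≠ u) (htv : t ≠ v)
    (hd : dist u t < dist u v)
    (hvt : (W \ fromEdgeSet {s(u,v)}).Reachable v t) : False := by
  cases nonempty_fintype X
  set W0 := W \ fromEdgeSet {s(u,v)} with hW0
  have hbridge : ¬ W0.Reachable u v := by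
    have h1 := (isAcyclic_iff_forall_adj_isBridge.mp hW.1.2) huv
    rw [isBridge_iff] at h1
    exact h1
  have hne : u ≠ v := huv.ne
  have hWut : ¬ W.Adj u t := by
    intro hadj
    have h0 : W0.Adj u t := by
      simp only [hW0, sdiff_adj, fromEdgeSet_adj, Set.mem_singleton_iff]
      refine ⟨hadj, fun hc => ?_⟩
      rcases Sym2.eq_iff.mp hc.1 with ⟨-, h⟩ | ⟨-, h⟩
      · exact htv h
      · exact htu h
    exact hbridge (h0.reachable.trans hvt.symm)
  set W' := W0 ⊔ fromEdgeSet {s(u,t)} with hW'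
  have hW'adj : ∀ a b : X, W'.Adj a b ↔
      (W.Adj a b ∧ ¬((a = u ∧ b = v) ∨ (a = v ∧ b = u))) ∨
      ((a = u ∧ b = t) ∨ (a = t ∧ b = u)) := by
    intro a b
    simp only [hW', sup_adj, hW0, sdiff_adj, fromEdgeSet_adj, Set.mem_singleton_iff, Sym2.eq_iff]
    constructor
    · rintro (⟨hab, hne2⟩ | ⟨he, -⟩)
      · exact Or.inl ⟨hab, fun hc => hne2 ⟨hc, hab.ne⟩⟩
      · exact Or.inr he
    · rintro (⟨hab, hne2⟩ | he)
      · exact Or.inl ⟨hab, fun hc => hne2 hc.1⟩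
      · refine Or.inr ⟨he, ?_⟩
        rcases he with ⟨h1, h2⟩ | ⟨h1, h2⟩
        · exact fun hc => htu ((h2.symm.trans hc.symm).trans h1)
        · exact fun hc => htu ((h1.symm.trans hc).trans h2)
  have hadjut : W'.Adj u t := (hW'adj u t).mpr (Or.inr (Or.inl ⟨rfl, rfl⟩))
  have hreach : ∀ x : X, W'.Reachable u x := by
    intro x
    obtain ⟨p⟩ := hW.1.1 u x
    rcases walk_side W u v p (Or.inl (Reachable.refl u)) with h1 | h1
    · exact h1.mono le_sup_left
    · exact hadjut.reachable.trans
        (((hvt.mono (le_sup_left : W0 ≤ W')).symm).trans (h1.mono le_sup_left))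
  have hconn : W'.Connected := by
    have : Nonempty X := ⟨u⟩
    exact ⟨fun a b => (hreach a).symm.trans (hreach b)⟩
  have hbridge' : ¬ (W' \ fromEdgeSet {s(u,t)}).Reachable u t := by
    intro hr
    have hle : (W' \ fromEdgeSet {s(u,t)}) ≤ W0 := by
      intro a b hab
      rw [sdiff_adj, fromEdgeSet_adj, Set.mem_singleton_iff] at hab
      obtain ⟨h1, h2⟩ := hab
      rcases (hW'adj a b).mp h1 with ⟨hab', hne2⟩ | he
      · rw [hW0, sdiff_adj, fromEdgeSet_adj, Set.mem_singleton_iff]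
        exact ⟨hab', fun hc => hne2 (Sym2.eq_iff.mp hc.1)⟩
      · exact absurd ⟨Sym2.eq_iff.mpr he, h1.ne⟩ h2
    exact hbridge ((hr.mono hle).trans hvt.symm)
  have hnocyc : ∀ ⦃x : X⦄ (c : W'.Walk x x), c.IsCycle → s(u,t) ∉ c.edges :=
    (isBridge_iff_adj_and_forall_cycle_notMem hadjut).mp (isBridge_iff.mpr hbridge')
  have hacyc : W'.IsAcyclic := by
    intro x c hc
    have hmem : ∀ e ∈ c.edges, e ∈ W.edgeSet := by
      intro e he
      have h1 := c.edges_subset_edgeSet he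
      revert he h1
      induction e using Sym2.ind with
      | _ a b =>
        intro he h1
        rw [mem_edgeSet] at h1 ⊢
        rcases (hW'adj a b).mp h1 with ⟨hab, -⟩ | he2
        · exact hab
        · exact absurd (Sym2.eq_iff.mpr he2 ▸ he) (hnocyc c hc)
    exact hW.1.2 (c.transfer W hmem) (hc.transfer hmem)
  clear_value W0 W'
  have hpt : ∀ a b : X, (if W'.Adj a b then dist a b else 0)
      = (if W.Adj a b then dist a b else 0)
        - (if (a = u ∧ b = v) ∨ (a = v ∧ b = u) then dist u v else 0)
        + (if (a = u ∧ b = t) ∨ (a = t ∧ b = u) then dist u t else 0) := by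
    intro a b
    by_cases hg : (a = u ∧ b = v) ∨ (a = v ∧ b = u)
    · have hW'f : ¬ W'.Adj a b := by
        rw [hW'adj]
        rintro (⟨-, hn⟩ | ⟨h1, h2⟩ | ⟨h1, h2⟩)
        · exact hn hg
        · rcases hg with ⟨g1, g2⟩ | ⟨g1, g2⟩
          · exact htv (h2.symm.trans g2)
          · exact hne (h1.symm.trans g1)
        · rcases hg with ⟨g1, g2⟩ | ⟨g1, g2⟩
          · exact htu (h1.symm.trans g1)
          · exact htv (h1.symm.trans g1)
      have hWab : W.Adj a b := by
        rcases hg with ⟨g1, g2⟩ | ⟨g1, g2⟩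
        · rw [g1, g2]; exact huv
        · rw [g1, g2]; exact huv.symm
      have hdab : dist a b = dist u v := by
        rcases hg with ⟨g1, g2⟩ | ⟨g1, g2⟩
        · rw [g1, g2]
        · rw [g1, g2, _root_.dist_comm]
      have hhneg : ¬((a = u ∧ b = t) ∨ (a = t ∧ b = u)) := by
        rintro (⟨h1, h2⟩ | ⟨h1, h2⟩)
        · rcases hg with ⟨g1, g2⟩ | ⟨g1, g2⟩
          · exact htv (h2.symm.trans g2)
          · exact hne (h1.symm.trans g1)
        · rcases hg with ⟨g1, g2⟩ | ⟨g1, g2⟩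
          · exact htu (h1.symm.trans g1)
          · exact htv (h1.symm.trans g1)
      rw [if_neg hW'f, if_pos hWab, if_pos hg, if_neg hhneg, hdab]
      ring
    · by_cases hh : (a = u ∧ b = t) ∨ (a = t ∧ b = u)
      · have hW'ab : W'.Adj a b := (hW'adj a b).mpr (Or.inr hh)
        have hWab : ¬ W.Adj a b := by
          rcases hh with ⟨h1, h2⟩ | ⟨h1, h2⟩
          · rw [h1, h2]; exact hWut
          · rw [h1, h2]; exact fun hx => hWut hx.symm
        have hdab : dist a b = dist u t := by
          rcases hh with ⟨h1, h2⟩ | ⟨h1, h2⟩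
          · rw [h1, h2]
          · rw [h1, h2, _root_.dist_comm]
        rw [if_pos hW'ab, if_neg hWab, if_neg hg, if_pos hh, hdab]
        ring
      · have hiff : W'.Adj a b ↔ W.Adj a b := by
          rw [hW'adj]
          constructor
          · rintro (⟨hab, -⟩ | he)
            · exact hab
            · exact absurd he hh
          · intro hab
            exact Or.inl ⟨hab, hg⟩
        rw [if_neg hg, if_neg hh]
        by_cases hw : W.Adj a b
        · rw [if_pos hw, if_pos (hiff.mpr hw)]; ring
        · rw [if_neg hw, if_neg (fun hx => hw (hiff.mp hx))]; ring
  have hsum : (∑ a : X, ∑ b : X, if W'.Adj a b then dist a b else 0)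
      = (∑ a : X, ∑ b : X, if W.Adj a b then dist a b else 0)
        - 2 * dist u v + 2 * dist u t := by
    have e1 : ∀ a : X, (∑ b : X, if W'.Adj a b then dist a b else 0)
        = (∑ b : X, if W.Adj a b then dist a b else 0)
          - (∑ b : X, if (a = u ∧ b = v) ∨ (a = v ∧ b = u) then dist u v else 0)
          + (∑ b : X, if (a = u ∧ b = t) ∨ (a = t ∧ b = u) then dist u t else 0) := by
      intro a
      rw [← Finset.sum_sub_distrib, ← Finset.sum_add_distrib]
      exact Finset.sum_congr rfl fun b _ => hpt a b
    rw [Finset.sum_congr rfl fun a _ => e1 a, Finset.sum_add_distrib, Finset.sum_sub_distrib,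
      sum_pair_ite u v hne, sum_pair_ite u t (Ne.symm htu)]
  have hmin := hW.2 W' ⟨hconn, hacyc⟩
  simp only [graphCost_eq] at hmin
  rw [hsum] at hmin
  linarith

end AuxMST

/-- Every edge of a minimum spanning tree of a finite metric space carrying a tree-cover
is contained in a unique cover set. -/
theorem statement4 {X : Type*} [MetricSpace X] [Finite X]
    (Vc : Set X) (Ec : Set (Set X))
    (hcov : IsTreeCover (fun a b => dist a b) Vc Ec)
    (W : SimpleGraph X) (hW : IsMST (fun a b => dist a b) W) :
    ∀ u v : X, W.Adj u v → ∃! A : Set X, A ∈ Ec ∧ u ∈ A ∧ v ∈ A := by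
  intro u v huvW
  have hne : u ≠ v := huvW.ne
  have hex : ∃ A ∈ Ec, u ∈ A ∧ v ∈ A := by
    by_contra h
    obtain ⟨t, ht⟩ := hcov.2.2 u v hne h
    simp only [max_lt_iff] at ht
    have htu : t ≠ u := by
      rintro rfl
      have h2 := ht.2
      rw [_root_.dist_comm] at h2
      exact lt_irrefl _ h2
    have htv : t ≠ v := by
      rintro rfl
      exact lt_irrefl _ ht.1
    obtain ⟨p⟩ := hW.1.1 u t
    rcases walk_side W u v p (Or.inl (SimpleGraph.Reachable.refl u)) with h1 | h1
    · refine mst_swap W hW v u t huvW.symm htv htu ?_ ?_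
      · rw [_root_.dist_comm v u]
        exact ht.2
      · rw [Sym2.eq_swap]
        exact h1
    · exact mst_swap W hW u v t huvW htu htv ht.1 h1
  obtain ⟨A, hA, hu, hv⟩ := hex
  refine ⟨A, ⟨hA, hu, hv⟩, ?_⟩
  rintro B ⟨hB, huB, hvB⟩
  by_contra hAB
  have hsub := (hcov.1.2.2.2.1 B hB A hA hAB).1
  exact hne (hsub ⟨huB, hu⟩ ⟨hvB, hv⟩)
end
end

section
/- Let (𝒱, ℰ) be a tree-cover of a finite metric space (X,d) and let W be any minimum spanning tree of (X,d). Then for every A ∈ ℰ there exists a minimum spanning tree MST(A,d) of the submetric space (A,d) such that W is the union over A ∈ ℰ of these trees MST(A,d). Moreover, if for every A ∈ ℰ the minimum spanning tree of (A,d) is unique, then the minimum spanning tree of (X,d) is unique as well. -/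
open scoped Classical

noncomputable section

open Skel


section MSTHelpers

open SimpleGraph

variable {X : Type*} [MetricSpace X] [Fintype X]

omit [MetricSpace X] [Fintype X] in
lemma reach_transfer {G H : SimpleGraph X} (h : ∀ a b, G.Adj a b → H.Reachable a b)
    {x y : X} (hxy : G.Reachable x y) : H.Reachable x y := by
  obtain ⟨p⟩ := hxy
  induction p with
  | nil => exact Reachable.refl _
  | cons ha q ih => exact (h _ _ ha).trans ih

omit [MetricSpace X] [Fintype X] in
lemma reach_del {G : SimpleGraph X} {x y : X} (p : G.Walk x y) : ∀ v : X,
    (G.deleteEdges {s(y, v)}).Reachable x y ∨ (G.deleteEdges {s(y, v)}).Reachable x v := by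
  induction p with
  | nil => exact fun v => Or.inl (Reachable.refl _)
  | @cons a b c ha q ih =>
    intro v
    by_cases he : s(a, b) = s(c, v)
    · rw [Sym2.eq_iff] at he
      rcases he with ⟨rfl, rfl⟩ | ⟨rfl, rfl⟩
      · exact Or.inl (Reachable.refl _)
      · exact Or.inr (Reachable.refl _)
    · have hadj : (G.deleteEdges {s(c, v)}).Adj a b := by
        rw [deleteEdges_adj]
        exact ⟨ha, by simpa using he⟩
      rcases ih v with h | h
      · exact Or.inl (hadj.reachable.trans h)
      · exact Or.inr (hadj.reachable.trans h)

omit [MetricSpace X] in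
lemma edgeFinset_deleteEdges_single (G : SimpleGraph X) (e : Sym2 X) :
    (G.deleteEdges {e}).edgeFinset = G.edgeFinset.erase e := by
  ext f
  simp only [mem_edgeFinset, Finset.mem_erase, edgeSet_deleteEdges, Set.mem_diff,
    Set.mem_singleton_iff]
  tauto

omit [MetricSpace X] in
lemma edgeFinset_sup_fromEdgeSet (G : SimpleGraph X) {t v : X} (htv : t ≠ v) :
    (G ⊔ fromEdgeSet {s(t, v)}).edgeFinset = insert s(t, v) G.edgeFinset := by
  ext f
  simp only [mem_edgeFinset, edgeSet_sup, edgeSet_fromEdgeSet, Set.mem_union, Set.mem_diff,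
    Set.mem_singleton_iff, Finset.mem_insert, Set.mem_setOf_eq]
  constructor
  · rintro (h | ⟨rfl, -⟩)
    · exact Or.inr h
    · exact Or.inl rfl
  · rintro (rfl | h)
    · exact Or.inr ⟨rfl, by simp [htv]⟩
    · exact Or.inl h

omit [MetricSpace X] in
lemma connected_card_le : ∀ (k : ℕ) (G : SimpleGraph X), G.edgeFinset.card = k →
    G.Connected → Fintype.card X ≤ k + 1 := by
  intro k
  induction k using Nat.strong_induction_on with
  | _ k ih =>
    intro G hk hG
    by_cases hac : G.IsAcyclic
    · have ht : G.IsTree := ⟨hG, hac⟩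
      rw [← ht.card_edgeFinset, hk]
    · rw [isAcyclic_iff_forall_edge_isBridge] at hac
      push_neg at hac
      obtain ⟨e, he, hbr⟩ := hac
      induction e with
      | _ a b =>
        rw [isBridge_iff] at hbr
        rw [not_not] at hbr
        rw [mem_edgeSet] at he
        have hreach : (G.deleteEdges {s(a, b)}).Reachable a b := hbr
        set H := G.deleteEdges {s(a, b)} with hH
        have hcon : H.Connected := by
          haveI : Nonempty X := hG.nonempty
          refine ⟨fun x y => ?_⟩
          refine reach_transfer (fun c d hcd => ?_) (hG.preconnected x y)
          by_cases hcd' : s(c, d) = s(a, b)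
          · rw [Sym2.eq_iff] at hcd'
            rcases hcd' with ⟨rfl, rfl⟩ | ⟨rfl, rfl⟩
            · exact hreach
            · exact hreach.symm
          · exact Adj.reachable (by rw [hH, deleteEdges_adj]; exact ⟨hcd, by simpa using hcd'⟩)
        have hcard : H.edgeFinset.card = k - 1 := by
          have h0 := congrArg Finset.card (edgeFinset_deleteEdges_single G s(a, b))
          rw [Finset.card_erase_of_mem (by simpa using he), hk] at h0
          convert h0 using 2
        have hk1 : 1 ≤ k := by
          rw [← hk]
          exact Finset.card_pos.2 ⟨s(a, b), by simpa using he⟩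
        have := ih (k - 1) (by omega) H (by convert hcard) hcon
        omega

omit [MetricSpace X] in
lemma isTree_of_connected_card {G : SimpleGraph X} (hG : G.Connected)
    (hcard : G.edgeFinset.card + 1 = Fintype.card X) : G.IsTree := by
  refine ⟨hG, ?_⟩
  by_contra hac
  rw [isAcyclic_iff_forall_edge_isBridge] at hac
  push_neg at hac
  obtain ⟨e, he, hbr⟩ := hac
  induction e with
  | _ a b =>
    rw [isBridge_iff, not_not] at hbr
    rw [mem_edgeSet] at he
    have hreach : (G.deleteEdges {s(a, b)}).Reachable a b := hbr
    set H := G.deleteEdges {s(a, b)} with hH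
    have hcon : H.Connected := by
      haveI : Nonempty X := hG.nonempty
      refine ⟨fun x y => ?_⟩
      refine reach_transfer (fun c d hcd => ?_) (hG.preconnected x y)
      by_cases hcd' : s(c, d) = s(a, b)
      · rw [Sym2.eq_iff] at hcd'
        rcases hcd' with ⟨rfl, rfl⟩ | ⟨rfl, rfl⟩
        · exact hreach
        · exact hreach.symm
      · exact Adj.reachable (by rw [hH, deleteEdges_adj]; exact ⟨hcd, by simpa using hcd'⟩)
    have hmem : s(a, b) ∈ G.edgeFinset := by simpa using he
    have hcard' : H.edgeFinset.card = G.edgeFinset.card - 1 := by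
      have h0 := congrArg Finset.card (edgeFinset_deleteEdges_single G s(a, b))
      rw [Finset.card_erase_of_mem hmem] at h0
      convert h0 using 2
    have hk1 : 1 ≤ G.edgeFinset.card := Finset.card_pos.2 ⟨s(a, b), hmem⟩
    have := connected_card_le (G.edgeFinset.card - 1) H (by convert hcard') hcon
    omega

omit [Fintype X] in
lemma sym2Dist_mk (u v : X) : sym2Dist s(u, v) = dist u v := rfl

omit [Fintype X] in
lemma sym2Dist_nonneg (e : Sym2 X) : 0 ≤ sym2Dist e := by
  induction e with
  | _ u v => exact dist_nonneg

lemma dart_sum (W : SimpleGraph X) :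
    ∑ d : W.Dart, sym2Dist d.edge = 2 * ∑ e ∈ W.edgeFinset, sym2Dist e := by
  classical
  rw [← Finset.sum_fiberwise_of_maps_to (s := (Finset.univ : Finset W.Dart))
    (g := SimpleGraph.Dart.edge) (t := W.edgeFinset)
    (fun d _ => by simp [SimpleGraph.Dart.edge_mem]) (fun d => sym2Dist d.edge)]
  rw [Finset.mul_sum]
  refine Finset.sum_congr rfl ?_
  intro e he
  have hcard : ({d : W.Dart | d.edge = e} : Finset _).card = 2 :=
    W.dart_edge_fiber_card e (by simpa using he)
  have : ∀ d ∈ ({d : W.Dart | d.edge = e} : Finset _), sym2Dist d.edge = sym2Dist e := by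
    intro d hd
    simp only [Finset.mem_filter] at hd
    rw [hd.2]
  rw [Finset.sum_congr rfl this, Finset.sum_const, hcard]
  simp [mul_comm]

lemma graphCost_eq_sum (W : SimpleGraph X) :
    graphCost (fun a b => dist a b) W = ∑ e ∈ W.edgeFinset, sym2Dist e := by
  classical
  have h1 : ∑ᶠ u : X, ∑ᶠ v : X, (if W.Adj u v then dist u v else 0)
      = ∑ u : X, ∑ v : X, (if W.Adj u v then dist u v else 0) := by
    rw [finsum_eq_sum_of_fintype]
    exact Finset.sum_congr rfl fun u _ => finsum_eq_sum_of_fintype _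
  have h2 : ∑ u : X, ∑ v : X, (if W.Adj u v then dist u v else 0)
      = ∑ d : W.Dart, sym2Dist d.edge := by
    rw [← Finset.sum_product']
    rw [← Finset.sum_filter_add_sum_filter_not (Finset.univ ×ˢ Finset.univ)
      (fun p : X × X => W.Adj p.1 p.2)]
    have hz : ∑ p ∈ (Finset.univ ×ˢ Finset.univ).filter (fun p : X × X => ¬ W.Adj p.1 p.2),
        (if W.Adj p.1 p.2 then dist p.1 p.2 else 0) = 0 := by
      refine Finset.sum_eq_zero fun p hp => ?_
      simp only [Finset.mem_filter] at hp
      simp [hp.2]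
    rw [hz, add_zero]
    refine (Finset.sum_bij' (fun (d : W.Dart) _ => d.toProd)
      (fun p hp => SimpleGraph.Dart.mk p (by simpa using (Finset.mem_filter.1 hp).2))
      ?_ ?_ ?_ ?_ ?_).symm
    · intro d _; simp [d.adj]
    · intro p hp; simp
    · intro d hd; rfl
    · intro p hp; rfl
    · intro d _
      rw [if_pos d.adj]
      rfl
  rw [graphCost, h1, h2, dart_sum]
  ring

lemma swap_tree {W : SimpleGraph X} (hT : W.IsTree) {u v t : X} (he : W.Adj u v)
    (ht : (W.deleteEdges {s(u, v)}).Reachable t u) (htu : t ≠ u) (htv : t ≠ v) :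
    ∃ W' : SimpleGraph X, W'.IsTree ∧
      graphCost (fun a b => dist a b) W' =
        graphCost (fun a b => dist a b) W - dist u v + dist t v := by
  classical
  have huv : u ≠ v := he.ne
  have hbridge : ¬ (W.deleteEdges {s(u, v)}).Reachable u v := by
    have hb : W.IsBridge s(u, v) := (isAcyclic_iff_forall_adj_isBridge.1 hT.IsAcyclic) he
    rw [isBridge_iff] at hb
    exact hb
  have hne_edge : s(t, v) ≠ s(u, v) := by
    intro h
    rw [Sym2.eq_iff] at h
    rcases h with ⟨h1, h2⟩ | ⟨h1, h2⟩
    · exact htu h1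
    · exact htv h1
  have hnotin : s(t, v) ∉ W.edgeSet := by
    intro h
    have hadj : (W.deleteEdges {s(u, v)}).Adj t v := by
      rw [deleteEdges_adj]
      exact ⟨h, by simpa using hne_edge⟩
    exact hbridge (ht.symm.trans hadj.reachable)
  obtain ⟨W', hW'⟩ : ∃ W'' : SimpleGraph X,
      W'' = W.deleteEdges {s(u, v)} ⊔ fromEdgeSet {s(t, v)} := ⟨_, rfl⟩
  have hle : W.deleteEdges {s(u, v)} ≤ W' := hW' ▸ le_sup_left
  have htv_adj : W'.Adj t v := by
    rw [hW']
    refine (SimpleGraph.sup_adj _ _ _ _).2 (Or.inr ?_)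
    rw [fromEdgeSet_adj]
    exact ⟨rfl, htv⟩
  have key : W'.Reachable u v := ((ht.mono hle).symm).trans htv_adj.reachable
  haveI : Nonempty X := hT.isConnected.nonempty
  have hcon : W'.Connected := by
    refine ⟨fun x y => ?_⟩
    refine reach_transfer (fun c d hcd => ?_) (hT.isConnected.preconnected x y)
    by_cases hcd' : s(c, d) = s(u, v)
    · rw [Sym2.eq_iff] at hcd'
      rcases hcd' with ⟨rfl, rfl⟩ | ⟨rfl, rfl⟩
      · exact key
      · exact key.symm
    · exact Adj.reachable (hle (by rw [deleteEdges_adj]; exact ⟨hcd, by simpa using hcd'⟩))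

  have hedges : W'.edgeFinset = insert s(t, v) (W.edgeFinset.erase s(u, v)) := by
    ext f
    rw [mem_edgeFinset, hW']
    simp only [edgeSet_sup, edgeSet_fromEdgeSet, edgeSet_deleteEdges, Set.mem_union,
      Set.mem_diff, Set.mem_singleton_iff, Finset.mem_insert, Finset.mem_erase,
      mem_edgeFinset, Set.mem_setOf_eq]
    constructor
    · rintro (⟨h1, h2⟩ | ⟨rfl, -⟩)
      · exact Or.inr ⟨h2, h1⟩
      · exact Or.inl rfl
    · rintro (rfl | ⟨h1, h2⟩)
      · exact Or.inr ⟨rfl, by simp [htv]⟩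
      · exact Or.inl ⟨h2, h1⟩
  have hmem_uv : s(u, v) ∈ W.edgeFinset := by simpa using he
  have hnotin' : s(t, v) ∉ W.edgeFinset.erase s(u, v) := by
    intro h
    exact hnotin (by simpa using (Finset.mem_of_mem_erase h))
  have hcard : W'.edgeFinset.card = W.edgeFinset.card := by
    rw [hedges, Finset.card_insert_of_notMem hnotin', Finset.card_erase_of_mem hmem_uv]
    have : 1 ≤ W.edgeFinset.card := Finset.card_pos.2 ⟨_, hmem_uv⟩
    omega
  refine ⟨W', isTree_of_connected_card hcon ?_, ?_⟩
  · rw [show W'.edgeFinset = insert s(t, v) (W.edgeFinset.erase s(u, v)) from hedges,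
      Finset.card_insert_of_notMem hnotin', Finset.card_erase_of_mem hmem_uv,
      ← hT.card_edgeFinset]
    have : 1 ≤ W.edgeFinset.card := Finset.card_pos.2 ⟨_, hmem_uv⟩
    omega
  · rw [graphCost_eq_sum, graphCost_eq_sum,
      show W'.edgeFinset = insert s(t, v) (W.edgeFinset.erase s(u, v)) from hedges,
      Finset.sum_insert hnotin', Finset.sum_erase_eq_sub hmem_uv, sym2Dist_mk, sym2Dist_mk]
    ring

lemma edge_in_cover {Vc : Set X} {Ec : Set (Set X)}
    (hcov : IsTreeCover (fun a b => dist a b) Vc Ec)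
    {W : SimpleGraph X} (hW : IsMST (fun a b => dist a b) W)
    {u v : X} (huv : W.Adj u v) : ∃ A ∈ Ec, u ∈ A ∧ v ∈ A := by
  by_contra hno
  obtain ⟨t, hmax⟩ := hcov.2.2 u v huv.ne hno
  have hdu : dist u t < dist u v := lt_of_le_of_lt (le_max_left _ _) hmax
  have hdv : dist v t < dist u v := lt_of_le_of_lt (le_max_right _ _) hmax
  have htu : t ≠ u := by
    rintro rfl
    rw [_root_.dist_comm] at hdv
    exact lt_irrefl _ hdv
  have htv : t ≠ v := by
    rintro rfl
    exact lt_irrefl _ hdu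
  obtain ⟨p⟩ := hW.1.isConnected.preconnected t u
  rcases reach_del p v with hru | hrv
  · obtain ⟨W', hW'tree, hW'cost⟩ := swap_tree hW.1 huv hru htu htv
    have hle := hW.2 W' hW'tree
    rw [hW'cost, _root_.dist_comm t v] at hle
    linarith
  · have hrv' : (W.deleteEdges {s(v, u)}).Reachable t v := by
      rwa [Sym2.eq_swap] at hrv
    obtain ⟨W', hW'tree, hW'cost⟩ := swap_tree hW.1 huv.symm hrv' htv htu
    have hle := hW.2 W' hW'tree
    rw [hW'cost, _root_.dist_comm v u, _root_.dist_comm t u] at hle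
    linarith

/-- The nerve restricted to cover sets different from `A`. -/
def nerveD {Y : Type*} (Vc : Set Y) (Ec : Set (Set Y)) (A : Set Y) : SimpleGraph ↥Vc where
  Adj u v := u ≠ v ∧ ∃ B ∈ Ec, B ≠ A ∧ (u : Y) ∈ B ∧ (v : Y) ∈ B
  symm := by
    constructor
    rintro u v ⟨h, B, hB, hBA, hu, hv⟩
    exact ⟨Ne.symm h, B, hB, hBA, hv, hu⟩
  loopless := by
    constructor
    rintro u ⟨h, -⟩
    exact h rfl

omit [Fintype X] in
lemma no_gate_path {Vc : Set X} {Ec : Set (Set X)}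
    (hcov : IsTreeCover (fun a b => dist a b) Vc Ec)
    {A : Set X} (hA : A ∈ Ec) {a b : X} (ha : a ∈ Vc) (hb : b ∈ Vc) (haA : a ∈ A) (hbA : b ∈ A)
    (hab : a ≠ b) : ¬ (nerveD Vc Ec A).Reachable ⟨a, ha⟩ ⟨b, hb⟩ := by
  intro hr
  have hne : (⟨a, ha⟩ : ↥Vc) ≠ ⟨b, hb⟩ := fun h => hab (congrArg Subtype.val h)
  have hadj : (nerve Vc Ec).Adj ⟨a, ha⟩ ⟨b, hb⟩ := ⟨hne, A, hA, haA, hbA⟩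
  have hbr : (nerve Vc Ec).IsBridge s(⟨a, ha⟩, ⟨b, hb⟩) :=
    (isAcyclic_iff_forall_adj_isBridge.1 hcov.2.1.1.IsAcyclic) hadj
  rw [isBridge_iff] at hbr
  refine hbr (hr.mono ?_)
  rintro u v ⟨huv, B, hB, hBA, huB, hvB⟩
  refine ⟨⟨huv, B, hB, huB, hvB⟩, ?_⟩
  rw [fromEdgeSet_adj]
  rintro ⟨hmem, -⟩
  rw [Set.mem_singleton_iff, Sym2.eq_iff] at hmem
  have hABeq : A = B := by
    rcases hmem with ⟨rfl, rfl⟩ | ⟨rfl, rfl⟩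
    · exact hcov.2.1.2 A hA B hB a b hab ha hb haA hbA huB hvB
    · exact hcov.2.1.2 A hA B hB a b hab ha hb haA hbA hvB huB
  exact hBA hABeq.symm

lemma walk_lift {Vc : Set X} {Ec : Set (Set X)}
    (hcov : IsTreeCover (fun a b => dist a b) Vc Ec)
    {W : SimpleGraph X} (hW : IsMST (fun a b => dist a b) W)
    {A : Set X} (hA : A ∈ Ec) :
    ∀ {x b : X} (p : W.Walk x b) (hb : b ∈ Vc),
      (∀ e ∈ p.edges, ∃ z ∈ e, z ∉ A) →
      ∀ B ∈ Ec, B ≠ A → x ∈ B →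
      ∃ (v : X) (hv : v ∈ Vc), v ∈ B ∧ (nerveD Vc Ec A).Reachable ⟨v, hv⟩ ⟨b, hb⟩ := by
  intro x b p
  induction p with
  | nil =>
    intro hb _ B hB hBA hxB
    refine ⟨_, hb, hxB, ?_⟩
    exact Reachable.refl _
  | @cons c y d h q ih =>
    intro hb hedges B hB hBA hcB
    obtain ⟨B', hB', hcB', hyB'⟩ := edge_in_cover hcov hW h
    have hB'A : B' ≠ A := by
      rintro rfl
      obtain ⟨z, hz, hzA⟩ := hedges s(c, y) (by simp [Walk.edges_cons])
      rw [Sym2.mem_iff] at hz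
      rcases hz with rfl | rfl
      · exact hzA hcB'
      · exact hzA hyB'
    have hq_edges : ∀ e ∈ q.edges, ∃ z ∈ e, z ∉ A := fun e he =>
      hedges e (by simp [Walk.edges_cons, he])
    by_cases hBB : B' = B
    · subst hBB
      exact ih hb hq_edges B' hB' hB'A hyB'
    · obtain ⟨v, hv, hvB', hreach⟩ := ih hb hq_edges B' hB' hB'A hyB'
      have hcVc : c ∈ Vc := by
        have hsub := (hcov.1.2.2.2.1 B hB B' hB' (Ne.symm hBB)).2
        exact hsub ⟨hcB, hcB'⟩
      refine ⟨c, hcVc, hcB, ?_⟩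
      by_cases hcv : c = v
      · have : (⟨c, hcVc⟩ : ↥Vc) = ⟨v, hv⟩ := Subtype.ext hcv
        rw [this]
        exact hreach
      · have hadj : (nerveD Vc Ec A).Adj ⟨c, hcVc⟩ ⟨v, hv⟩ :=
          ⟨fun hh => hcv (congrArg Subtype.val hh), B', hB', hB'A, hcB', hvB'⟩
        exact hadj.reachable.trans hreach

lemma support_in_A {Vc : Set X} {Ec : Set (Set X)}
    (hcov : IsTreeCover (fun a b => dist a b) Vc Ec)
    {W : SimpleGraph X} (hW : IsMST (fun a b => dist a b) W)
    {A : Set X} (hA : A ∈ Ec) :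
    ∀ (n : ℕ) {a b : X} (p : W.Walk a b), p.length = n → p.IsPath → a ∈ A → b ∈ A →
      ∀ x ∈ p.support, x ∈ A := by
  intro n
  induction n using Nat.strong_induction_on with
  | _ n ih =>
    intro a b p hlen hpath ha hb x hx
    cases p with
    | nil =>
      rw [Walk.support_nil, List.mem_singleton] at hx
      exact hx ▸ ha
    | @cons _ y _ h q =>
      rw [Walk.cons_isPath_iff] at hpath
      rw [Walk.length_cons] at hlen
      by_cases hyA : y ∈ A
      · rw [Walk.support_cons] at hx
        rcases List.mem_cons.1 hx with rfl | hx'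
        · exact ha
        · exact ih q.length (by omega) q rfl hpath.1 hyA hb x hx'
      · by_cases hint : ∃ z ∈ q.support, z ∈ A ∧ z ≠ b
        · obtain ⟨z, hzq, hzA, hzb⟩ := hint
          have hza : z ≠ a := fun hh => hpath.2 (hh ▸ hzq)
          have hzp : z ∈ (Walk.cons h q).support := by
            rw [Walk.support_cons]
            exact List.mem_cons_of_mem _ hzq
          have hsplit := (Walk.cons h q).take_spec hzp
          have hlen_add : ((Walk.cons h q).takeUntil z hzp).length
              + ((Walk.cons h q).dropUntil z hzp).length = n := by
            have := congrArg Walk.length hsplit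
            rw [Walk.length_append] at this
            rw [this, Walk.length_cons, hlen]
          have h1pos : 1 ≤ ((Walk.cons h q).takeUntil z hzp).length := by
            rcases Nat.eq_zero_or_pos ((Walk.cons h q).takeUntil z hzp).length with h0 | h1
            · exact absurd (Walk.eq_of_length_eq_zero h0) hza.symm
            · exact h1
          have h2pos : 1 ≤ ((Walk.cons h q).dropUntil z hzp).length := by
            rcases Nat.eq_zero_or_pos ((Walk.cons h q).dropUntil z hzp).length with h0 | h1
            · exact absurd (Walk.eq_of_length_eq_zero h0) hzb
            · exact h1
          have hpq : (Walk.cons h q).IsPath := by rw [Walk.cons_isPath_iff]; exact hpath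
          rw [← hsplit, Walk.mem_support_append_iff] at hx
          rcases hx with hx1 | hx2
          · exact ih ((Walk.cons h q).takeUntil z hzp).length (by omega)
              ((Walk.cons h q).takeUntil z hzp) rfl (hpq.takeUntil hzp) ha hzA x hx1
          · exact ih ((Walk.cons h q).dropUntil z hzp).length (by omega)
              ((Walk.cons h q).dropUntil z hzp) rfl (hpq.dropUntil hzp) hzA hb x hx2
        · exfalso
          push_neg at hint
          have hab : a ≠ b := by
            rintro rfl
            exact hpath.2 q.end_mem_support
          have hedges : ∀ e ∈ (Walk.cons h q).edges, ∃ z ∈ e, z ∉ A := by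
            intro e he
            induction e with
            | _ c d =>
              rw [Walk.edges_cons] at he
              rcases List.mem_cons.1 he with heq | he'
              · rw [heq]
                exact ⟨y, by simp, hyA⟩
              · by_contra hcon
                push_neg at hcon
                have hcd : c ≠ d := (q.adj_of_mem_edges he').ne
                have hc : c ∈ q.support := q.fst_mem_support_of_mem_edges he'
                have hd : d ∈ q.support := q.snd_mem_support_of_mem_edges he'
                have hcb := hint c hc (hcon c (by simp))
                have hdb := hint d hd (hcon d (by simp))
                exact hcd (hcb.trans hdb.symm)
          obtain ⟨B1, hB1, haB1, hyB1⟩ := edge_in_cover hcov hW h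
          have hB1A : B1 ≠ A := fun hh => hyA (hh ▸ hyB1)
          have haVc : a ∈ Vc := (hcov.1.2.2.2.1 A hA B1 hB1 (Ne.symm hB1A)).2 ⟨ha, haB1⟩
          obtain ⟨w, hbw, p', hrev⟩ := Walk.exists_eq_cons_of_ne (Ne.symm hab) (Walk.cons h q).reverse
          have hlastedge : s(b, w) ∈ (Walk.cons h q).edges := by
            have hmem : s(b, w) ∈ (Walk.cons h q).reverse.edges := by
              rw [hrev, Walk.edges_cons]
              exact List.mem_cons_self
            rwa [Walk.edges_reverse, List.mem_reverse] at hmem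
          have hwA : w ∉ A := by
            obtain ⟨z, hz, hzA⟩ := hedges _ hlastedge
            rw [Sym2.mem_iff] at hz
            rcases hz with rfl | rfl
            · exact (hzA hb).elim
            · exact hzA
          obtain ⟨Bk, hBk, hbBk, hwBk⟩ := edge_in_cover hcov hW hbw
          have hBkA : Bk ≠ A := fun hh => hwA (hh ▸ hwBk)
          have hbVc : b ∈ Vc := (hcov.1.2.2.2.1 A hA Bk hBk (Ne.symm hBkA)).2 ⟨hb, hbBk⟩
          obtain ⟨v, hv, hvB1, hreach⟩ :=
            walk_lift hcov hW hA (Walk.cons h q) hbVc hedges B1 hB1 hB1A haB1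
          have hfinal : (nerveD Vc Ec A).Reachable ⟨a, haVc⟩ ⟨b, hbVc⟩ := by
            by_cases hav : a = v
            · have heq : (⟨a, haVc⟩ : ↥Vc) = ⟨v, hv⟩ := Subtype.ext hav
              rw [heq]
              exact hreach
            · have hadj : (nerveD Vc Ec A).Adj ⟨a, haVc⟩ ⟨v, hv⟩ :=
                ⟨fun hh => hav (congrArg Subtype.val hh), B1, hB1, hB1A, haB1, hvB1⟩
              exact hadj.reachable.trans hreach
          exact no_gate_path hcov hA haVc hbVc ha hb hab hfinal

/-- Restriction of a graph to edges inside a set. -/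
def restrictG {Y : Type*} (W : SimpleGraph Y) (A : Set Y) : SimpleGraph Y where
  Adj a b := W.Adj a b ∧ a ∈ A ∧ b ∈ A
  symm := by
    constructor
    rintro a b ⟨h, ha, hb⟩
    exact ⟨h.symm, hb, ha⟩
  loopless := ⟨fun a h => W.loopless.irrefl a h.1⟩

omit [MetricSpace X] [Fintype X] in
lemma walk_to_induce {G : SimpleGraph X} {A : Set X} :
    ∀ {a b : X} (p : G.Walk a b), (∀ x ∈ p.support, x ∈ A) → ∀ (ha : a ∈ A) (hb : b ∈ A),
      ((restrictG G A).induce A).Reachable ⟨a, ha⟩ ⟨b, hb⟩ := by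
  intro a b p
  induction p with
  | nil => exact fun _ ha hb => Reachable.refl _
  | @cons c y d h q ih =>
    intro hsup hc hd
    have hy : y ∈ A := hsup y (by rw [Walk.support_cons]; exact List.mem_cons_of_mem _ q.start_mem_support)
    have hadj : ((restrictG G A).induce A).Adj ⟨c, hc⟩ ⟨y, hy⟩ := ⟨h, hc, hy⟩
    refine hadj.reachable.trans (ih ?_ hy hd)
    intro x hx
    exact hsup x (by rw [Walk.support_cons]; exact List.mem_cons_of_mem _ hx)

omit [MetricSpace X] [Fintype X] in
lemma reach_of_induce {G : SimpleGraph X} {A : Set X} {a b : ↥A}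
    (h : (G.induce A).Reachable a b) : G.Reachable ↑a ↑b := by
  obtain ⟨p⟩ := h
  induction p with
  | nil => exact Reachable.refl _
  | @cons u v w ha q ih =>
    have ha' : G.Adj ↑u ↑v := ha
    exact ha'.reachable.trans ih

omit [MetricSpace X] [Fintype X] in
lemma induce_acyclic_of_le {G H : SimpleGraph X} (hle : G ≤ H) (hac : H.IsAcyclic)
    (A : Set X) : (G.induce A).IsAcyclic := by
  intro v c hc
  have hmr : ∀ {x y : ↥A}, (G.induce A).Adj x y → H.Adj ↑x ↑y := fun h => hle h
  let f : G.induce A →g H := ⟨Subtype.val, hmr⟩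
  have hinj : Function.Injective (f : ↥A → X) := Subtype.val_injective
  exact hac (c.map f) ((Walk.map_isCycle_iff_of_injective hinj).2 hc)

omit [MetricSpace X] in
lemma card_edgeFinset_induce (G : SimpleGraph X) (A : Set X)
    (hGA : ∀ a b, G.Adj a b → a ∈ A ∧ b ∈ A) :
    (G.induce A).edgeFinset.card = G.edgeFinset.card := by
  refine Finset.card_bij (fun e _ => Sym2.map Subtype.val e) ?_ ?_ ?_
  · intro e he
    induction e with
    | _ u v =>
      rw [mem_edgeFinset, mem_edgeSet] at he
      show Sym2.map Subtype.val s(u, v) ∈ G.edgeFinset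
      rw [Sym2.map_pair_eq, mem_edgeFinset, mem_edgeSet]
      exact he
  · intro e1 h1 e2 h2 heq
    exact Sym2.map.injective Subtype.val_injective heq
  · intro e he
    induction e with
    | _ a b =>
      rw [mem_edgeFinset, mem_edgeSet] at he
      obtain ⟨ha, hb⟩ := hGA a b he
      refine ⟨s(⟨a, ha⟩, ⟨b, hb⟩), ?_, by simp⟩
      rw [mem_edgeFinset, mem_edgeSet]
      exact he

lemma restrict_isMSTOn {Vc : Set X} {Ec : Set (Set X)}
    (hcov : IsTreeCover (fun a b => dist a b) Vc Ec)
    {W : SimpleGraph X} (hW : IsMST (fun a b => dist a b) W)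
    {A : Set X} (hA : A ∈ Ec) : IsMSTOn (fun a b => dist a b) A (restrictG W A) := by
  classical
  have hrle : restrictG W A ≤ W := fun {a b} h => h.1
  have hAne : Nonempty ↥A := by
    obtain ⟨u, v, huv, hVA⟩ := hcov.1.2.2.2.2 A hA
    have : u ∈ Vc ∩ A := by rw [hVA]; exact Set.mem_insert _ _
    exact ⟨⟨u, this.2⟩⟩
  have hconn : ((restrictG W A).induce A).Connected := by
    refine ⟨fun a b => ?_⟩
    obtain ⟨a, ha⟩ := a
    obtain ⟨b, hb⟩ := b
    obtain ⟨w0⟩ := hW.1.isConnected.preconnected a b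
    have hsup := support_in_A hcov hW hA (w0.toPath : W.Walk a b).length
      (w0.toPath : W.Walk a b) rfl w0.toPath.isPath ha hb
    exact walk_to_induce (w0.toPath : W.Walk a b) hsup ha hb
  have htreeA : ((restrictG W A).induce A).IsTree :=
    ⟨hconn, induce_acyclic_of_le hrle hW.1.IsAcyclic A⟩
  refine ⟨⟨fun a b h => ⟨h.2.1, h.2.2⟩, htreeA⟩, ?_⟩
  rintro W' ⟨hW'A, hW'tree⟩
  -- build the exchanged graph
  obtain ⟨W'', hW''adj⟩ : ∃ G : SimpleGraph X, ∀ a b : X,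
      G.Adj a b ↔ ((W.Adj a b ∧ ¬(a ∈ A ∧ b ∈ A)) ∨ W'.Adj a b) := by
    refine ⟨⟨fun a b => (W.Adj a b ∧ ¬(a ∈ A ∧ b ∈ A)) ∨ W'.Adj a b, ?_, ?_⟩,
      fun a b => Iff.rfl⟩
    · constructor; rintro a b (⟨h, hn⟩ | h)
      · exact Or.inl ⟨h.symm, fun hh => hn ⟨hh.2, hh.1⟩⟩
      · exact Or.inr h.symm
    · constructor; rintro a (⟨h, -⟩ | h)
      · exact W.loopless.irrefl a h
      · exact W'.loopless.irrefl a h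
  haveI : Nonempty X := hW.1.isConnected.nonempty
  have hW''conn : W''.Connected := by
    refine ⟨fun x y => ?_⟩
    refine reach_transfer (fun a b hab => ?_) (hW.1.isConnected.preconnected x y)
    by_cases hmem : a ∈ A ∧ b ∈ A
    · have h1 : (W'.induce A).Reachable ⟨a, hmem.1⟩ ⟨b, hmem.2⟩ :=
        hW'tree.isConnected.preconnected _ _
      have h2 : W'.Reachable a b := reach_of_induce h1
      exact reach_transfer (fun c d hcd => Adj.reachable ((hW''adj c d).2 (Or.inr hcd))) h2
    · exact (Adj.reachable ((hW''adj a b).2 (Or.inl ⟨hab, hmem⟩)))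
  -- edge sets
  have hmemA : ∀ (a b : X), (∀ z ∈ s(a, b), z ∈ A) ↔ (a ∈ A ∧ b ∈ A) := by
    intro a b
    constructor
    · intro h
      exact ⟨h a (by simp), h b (by simp)⟩
    · rintro ⟨ha, hb⟩ z hz
      rw [Sym2.mem_iff] at hz
      rcases hz with rfl | rfl
      · exact ha
      · exact hb
  have hSA : W.edgeFinset.filter (fun e => ∀ z ∈ e, z ∈ A) = (restrictG W A).edgeFinset := by
    ext e
    induction e with
    | _ a b =>
      rw [Finset.mem_filter, mem_edgeFinset, mem_edgeFinset, mem_edgeSet, mem_edgeSet, hmemA]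
      constructor
      · rintro ⟨h1, h2⟩
        exact ⟨h1, h2⟩
      · rintro ⟨h1, h2⟩
        exact ⟨h1, h2⟩
  have hW''edges : W''.edgeFinset
      = W'.edgeFinset ∪ W.edgeFinset.filter (fun e => ¬ ∀ z ∈ e, z ∈ A) := by
    ext e
    induction e with
    | _ a b =>
      rw [Finset.mem_union, Finset.mem_filter, mem_edgeFinset, mem_edgeFinset, mem_edgeFinset,
        mem_edgeSet, mem_edgeSet, mem_edgeSet, hW''adj, hmemA]
      tauto
  have hdisj : Disjoint W'.edgeFinset (W.edgeFinset.filter (fun e => ¬ ∀ z ∈ e, z ∈ A)) := by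
    rw [Finset.disjoint_left]
    intro e he1 he2
    rw [Finset.mem_filter] at he2
    induction e with
    | _ a b =>
      rw [mem_edgeFinset, mem_edgeSet] at he1
      rw [hmemA] at he2
      exact he2.2 ⟨(hW'A a b he1).1, (hW'A a b he1).2⟩
  -- cardinalities
  have hcard1 : (restrictG W A).edgeFinset.card + 1 = Fintype.card ↥A := by
    rw [← card_edgeFinset_induce (restrictG W A) A (fun a b h => ⟨h.2.1, h.2.2⟩)]
    exact htreeA.card_edgeFinset
  have hcard2 : W'.edgeFinset.card + 1 = Fintype.card ↥A := by
    rw [← card_edgeFinset_induce W' A hW'A]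
    exact hW'tree.card_edgeFinset
  have hcard3 : (W.edgeFinset.filter (fun e => ∀ z ∈ e, z ∈ A)).card
      + (W.edgeFinset.filter (fun e => ¬ ∀ z ∈ e, z ∈ A)).card = W.edgeFinset.card :=
    Finset.card_filter_add_card_filter_not _
  have hcard4 : W''.edgeFinset.card = W'.edgeFinset.card
      + (W.edgeFinset.filter (fun e => ¬ ∀ z ∈ e, z ∈ A)).card := by
    rw [hW''edges, Finset.card_union_of_disjoint hdisj]
  have hcardW : W.edgeFinset.card + 1 = Fintype.card X := hW.1.card_edgeFinset
  have htree'' : W''.IsTree := by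
    refine isTree_of_connected_card hW''conn ?_
    rw [hSA] at hcard3
    omega
  -- cost comparison
  have hle := hW.2 W'' htree''
  rw [graphCost_eq_sum, graphCost_eq_sum, hW''edges, Finset.sum_union hdisj,
    ← Finset.sum_filter_add_sum_filter_not W.edgeFinset (fun e => ∀ z ∈ e, z ∈ A), hSA] at hle
  rw [graphCost_eq_sum, graphCost_eq_sum]
  linarith

lemma decomp {Vc : Set X} {Ec : Set (Set X)}
    (hcov : IsTreeCover (fun a b => dist a b) Vc Ec)
    {W : SimpleGraph X} (hW : IsMST (fun a b => dist a b) W) :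
    W = ⨆ A ∈ Ec, restrictG W A := by
  ext a b
  simp only [SimpleGraph.iSup_adj]
  constructor
  · intro h
    obtain ⟨B, hB, h1, h2⟩ := edge_in_cover hcov hW h
    exact ⟨B, hB, h, h1, h2⟩
  · rintro ⟨B, hB, h, -, -⟩
    exact h

end MSTHelpers

/-- Minimum spanning tree gluing lemma: any MST of a finite metric space with a tree-cover
decomposes as a union of MSTs of the cover sets; if each of those is unique, so is the
global MST. -/
theorem statement6 {X : Type*} [MetricSpace X] [Finite X]
    (Vc : Set X) (Ec : Set (Set X))
    (hcov : IsTreeCover (fun a b => dist a b) Vc Ec)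
    (W : SimpleGraph X) (hW : IsMST (fun a b => dist a b) W) :
    (∃ M : Set X → SimpleGraph X,
        (∀ A ∈ Ec, IsMSTOn (fun a b => dist a b) A (M A)) ∧ W = ⨆ A ∈ Ec, M A) ∧
      ((∀ A ∈ Ec, ∃! WA : SimpleGraph X, IsMSTOn (fun a b => dist a b) A WA) →
        ∃! W' : SimpleGraph X, IsMST (fun a b => dist a b) W') := by
  haveI : Fintype X := Fintype.ofFinite X
  constructor
  · exact ⟨fun A => restrictG W A, fun A hA => restrict_isMSTOn hcov hW hA, decomp hcov hW⟩
  · intro huniq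
    refine ⟨W, hW, ?_⟩
    intro W₂ hW₂
    have hAeq : ∀ A ∈ Ec, restrictG W₂ A = restrictG W A := by
      intro A hA
      obtain ⟨WA, hWA, hu⟩ := huniq A hA
      rw [hu _ (restrict_isMSTOn hcov hW₂ hA), hu _ (restrict_isMSTOn hcov hW hA)]
    rw [decomp hcov hW₂]
    conv_rhs => rw [decomp hcov hW]
    ext a b
    simp only [SimpleGraph.iSup_adj]
    constructor
    · rintro ⟨B, hB, h⟩
      rw [hAeq B hB] at h
      exact ⟨B, hB, h⟩
    · rintro ⟨B, hB, h⟩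
      rw [← hAeq B hB] at h
      exact ⟨B, hB, h⟩
end
end
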